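/- Let V and W be 1-Lipschitz vineyard modules over [t₀, t₁] over a field K. Suppose there are support sets S_t ⊆ {1,…,N} and, for each t and each i ∈ S_t, real numbers b_i(t) < d_i(t), together with families of extended bases (B_t^V)_{t} of the V_t and (B_t^W)_{t} of the W_t, each of common size N, such that for every t the i-th element of B_t^V and the i-th element of B_t^W are basis elements with birth b_i(t) and death d_i(t) when i ∈ S_t and are the zero element when i ∉ S_t, and such that for all t₀ ≤ s < t ≤ t₁ one has Mat_{B_s^V}^{B_t^V}(α_V^{s→t}) = Mat_{B_s^W}^{B_t^W}(α_W^{s→t}) and Mat_{B_t^V}^{B_s^V}(β_V^{t→s}) = Mat_{B_t^W}^{B_s^W}(β_W^{t→s}). Then V and W are isomorphic as vineyard modules: the family of maps ρ_t : V_t → W_t determined by Mat_{B_t^V}^{B_t^W}(ρ_t) = π_{S_t} (the diagonal matrix with entry 1 at each index in S_t and 0 elsewhere) is an invertible morphism of vineyard modules. -/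

import Mathlib

open scoped BigOperators

universe u v

/-- A persistence module over a field `K`. -/
structure PersistenceModule (K : Type u) [Field K] where
  space : ℝ → Type v
  [instAdd : ∀ t, AddCommGroup (space t)]
  [instMod : ∀ t, Module K (space t)]
  trans : ∀ s t : ℝ, s ≤ t → (space s →ₗ[K] space t)
  trans_self : ∀ (t : ℝ) (h : t ≤ t), trans t t h = LinearMap.id
  trans_trans : ∀ (r s t : ℝ) (hrs : r ≤ s) (hst : s ≤ t) (x : space r),
      trans s t hst (trans r s hrs x) = trans r t (hrs.trans hst) x

attribute [instance] PersistenceModule.instAdd PersistenceModule.instMod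

namespace PersistenceModule

variable {K : Type u} [Field K]

/-- `x ∈ X_t` is born at `t` if it is not in the image of any earlier transition map. -/
def BornAt (X : PersistenceModule K) (t : ℝ) (x : X.space t) : Prop :=
  ∀ (s : ℝ) (h : s < t), x ∉ Set.range (X.trans s t h.le)

/-- The death time of an element `x ∈ X_t`. -/
noncomputable def death (X : PersistenceModule K) (t : ℝ) (x : X.space t) : ℝ :=
  sInf {s : ℝ | ∃ h : t < s, X.trans t s h.le x = 0}

/-- `x` is a basis of `X` realizing the intervals `[b i, d i)`. -/
def IsBasisFamily {ι : Type*} (X : PersistenceModule K) (b d : ι → ℝ)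
    (x : ∀ i, X.space (b i)) : Prop :=
  (∀ i, X.BornAt (b i) (x i)) ∧
  (∀ i, X.death (b i) (x i) = d i) ∧
  (∀ t : ℝ,
    LinearIndependent K
      (fun i : {i : ι // b i ≤ t ∧ t < d i} => X.trans (b i.1) t i.2.1 (x i.1)) ∧
    Submodule.span K (Set.range
      (fun i : {i : ι // b i ≤ t ∧ t < d i} => X.trans (b i.1) t i.2.1 (x i.1))) = ⊤)

open scoped Classical in
/-- The image of the basis element `x j` at height `h` (or `0` if not yet born). -/
noncomputable def pushTo {ι : Type*} (X : PersistenceModule K) (b : ι → ℝ)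
    (x : ∀ i, X.space (b i)) (h : ℝ) (j : ι) : X.space h :=
  if hb : b j ≤ h then X.trans (b j) h hb (x j) else 0

end PersistenceModule

/-- An `ε`-morphism of persistence modules. -/
structure EpsMorphism {K : Type u} [Field K] (X Y : PersistenceModule K) (ε : ℝ) where
  maps : ∀ r r' : ℝ, r + ε = r' → (X.space r →ₗ[K] Y.space r')
  comm : ∀ (s t s' t' : ℝ) (hs : s + ε = s') (ht : t + ε = t') (hst : s ≤ t)
      (x : X.space s),
    maps t t' ht (X.trans s t hst x) = Y.trans s' t' (by linarith) (maps s s' hs x)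

/-- A pair of `ε`-morphisms forming an `ε`-interleaving. -/
def IsInterleaving {K : Type u} [Field K] (X Y : PersistenceModule K) (ε : ℝ)
    (F : EpsMorphism X Y ε) (G : EpsMorphism Y X ε) : Prop :=
  (∀ (r r'' : ℝ) (h : r + ε + ε = r'') (hr : r ≤ r'') (x : X.space r),
      G.maps (r + ε) r'' (by linarith) (F.maps r (r + ε) rfl x) = X.trans r r'' hr x) ∧
  (∀ (r r'' : ℝ) (h : r + ε + ε = r'') (hr : r ≤ r'') (y : Y.space r),
      F.maps (r + ε) r'' (by linarith) (G.maps r (r + ε) rfl y) = Y.trans r r'' hr y)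

/-- `A` is the matrix of the `ε`-morphism `α` with respect to the bases `x` of `X`
(realizing `[bX i, dX i)`) and `y` of `Y` (realizing `[bY j, dY j)`). -/
def IsMatrixOf {K : Type u} [Field K] {X Y : PersistenceModule K} {ε : ℝ}
    {N M : ℕ} (α : EpsMorphism X Y ε)
    (bX dX : Fin N → ℝ) (x : ∀ i, X.space (bX i))
    (bY dY : Fin M → ℝ) (y : ∀ j, Y.space (bY j))
    (A : Matrix (Fin M) (Fin N) K) : Prop :=
  (∀ i, α.maps (bX i) (bX i + ε) rfl (x i)
      = ∑ j, A j i • Y.pushTo bY y (bX i + ε) j) ∧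
  (∀ (j : Fin M) (i : Fin N), ¬ (bY j ≤ bX i + ε ∧ bX i + ε < dY j) → A j i = 0)

/-- A basis transformation matrix. -/
def IsBasisTransformMatrix {K : Type u} [Field K] {N : ℕ} (b d : Fin N → ℝ)
    (A : Matrix (Fin N) (Fin N) K) : Prop :=
  (∀ i, A i i ≠ 0) ∧ ∀ j i, A j i ≠ 0 → b j ≤ b i ∧ d j ≤ d i

/-- The transformed family `A(B)`: `x_i^new = ∑ j A j i • φ(x_j)`. -/
noncomputable def transformBasis {K : Type u} [Field K] {N : ℕ} (X : PersistenceModule K)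
    (b : Fin N → ℝ) (x : ∀ i, X.space (b i)) (A : Matrix (Fin N) (Fin N) K)
    (i : Fin N) : X.space (b i) :=
  ∑ j, A j i • X.pushTo b x (b i) j

/-- The elementary matrix `e_{lk}^μ`: identity with extra entry `μ` in position `(k, l)`. -/
def eMat {K : Type u} [Field K] {N : ℕ} (l k : Fin N) (μ : K) : Matrix (Fin N) (Fin N) K :=
  1 + Matrix.single k l μ

/-- A `1`-Lipschitz vineyard module over `[t0, t1]`: a family of persistence modules together
with `|s - t|`-interleavings between the modules at times `s < t`, all of which commute with
each other and with the transition maps. -/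
structure VineyardModule.{u_1} (K : Type u) [Field K] (t0 t1 : ℝ) where
  M : ℝ → PersistenceModule.{u, u_1} K
  F : ∀ s t : ℝ, t0 ≤ s → s < t → t ≤ t1 → EpsMorphism (M s) (M t) (t - s)
  G : ∀ s t : ℝ, t0 ≤ s → s < t → t ≤ t1 → EpsMorphism (M t) (M s) (t - s)
  inter : ∀ (s t : ℝ) (h0 : t0 ≤ s) (hst : s < t) (h1 : t ≤ t1),
    IsInterleaving (M s) (M t) (t - s) (F s t h0 hst h1) (G s t h0 hst h1)
  Fcomp : ∀ (s t u : ℝ) (h0 : t0 ≤ s) (hst : s < t) (htu : t < u) (h1 : u ≤ t1)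
      (h0t : t0 ≤ t) (ht1 : t ≤ t1) (hsu : s < u)
      (r r' r'' : ℝ) (h : r + (t - s) = r') (h' : r' + (u - t) = r'')
      (h'' : r + (u - s) = r'') (xx : (M s).space r),
    (F t u h0t htu h1).maps r' r'' h' ((F s t h0 hst ht1).maps r r' h xx)
      = (F s u h0 hsu h1).maps r r'' h'' xx
  Gcomp : ∀ (s t u : ℝ) (h0 : t0 ≤ s) (hst : s < t) (htu : t < u) (h1 : u ≤ t1)
      (h0t : t0 ≤ t) (ht1 : t ≤ t1) (hsu : s < u)
      (r r' r'' : ℝ) (h : r + (u - t) = r') (h' : r' + (t - s) = r'')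
      (h'' : r + (u - s) = r'') (xx : (M u).space r),
    (G s t h0 hst ht1).maps r' r'' h' ((G t u h0t htu h1).maps r r' h xx)
      = (G s u h0 hsu h1).maps r r'' h'' xx
  mixedGF : ∀ (s t u : ℝ) (h0 : t0 ≤ s) (hst : s < t) (htu : t < u) (h1 : u ≤ t1)
      (h0t : t0 ≤ t) (ht1 : t ≤ t1) (hsu : s < u)
      (r r1 r2 r3 : ℝ) (hr1 : r + (u - s) = r1) (hr2 : r1 + (u - t) = r2)
      (hr3 : r + (t - s) = r3) (hle : r3 ≤ r2) (xx : (M s).space r),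
    (G t u h0t htu h1).maps r1 r2 hr2 ((F s u h0 hsu h1).maps r r1 hr1 xx)
      = (M t).trans r3 r2 hle ((F s t h0 hst ht1).maps r r3 hr3 xx)
  mixedFG : ∀ (s t u : ℝ) (h0 : t0 ≤ s) (hst : s < t) (htu : t < u) (h1 : u ≤ t1)
      (h0t : t0 ≤ t) (ht1 : t ≤ t1) (hsu : s < u)
      (r r1 r2 r3 : ℝ) (hr1 : r + (t - s) = r1) (hr2 : r1 + (u - s) = r2)
      (hr3 : r + (u - t) = r3) (hle : r3 ≤ r2) (xx : (M t).space r),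
    (F s u h0 hsu h1).maps r1 r2 hr2 ((G s t h0 hst ht1).maps r r1 hr1 xx)
      = (M u).trans r3 r2 hle ((F t u h0t htu h1).maps r r3 hr3 xx)

/-- A morphism of vineyard modules: a family of (`0`-)morphisms of persistence modules,
one for each time, commuting with all the interleaving maps. -/
structure VineyardMorphism {K : Type u} [Field K] {t0 t1 : ℝ}
    (V W : VineyardModule K t0 t1) where
  maps : ∀ t : ℝ, t0 ≤ t → t ≤ t1 → EpsMorphism (V.M t) (W.M t) 0
  commF : ∀ (s t : ℝ) (h0 : t0 ≤ s) (hst : s < t) (h1 : t ≤ t1) (h0t : t0 ≤ t)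
      (hs1 : s ≤ t1) (r r' : ℝ) (h : r + (t - s) = r') (xx : (V.M s).space r),
    (maps t h0t h1).maps r' r' (add_zero r') ((V.F s t h0 hst h1).maps r r' h xx)
      = (W.F s t h0 hst h1).maps r r' h ((maps s h0 hs1).maps r r (add_zero r) xx)
  commG : ∀ (s t : ℝ) (h0 : t0 ≤ s) (hst : s < t) (h1 : t ≤ t1) (h0t : t0 ≤ t)
      (hs1 : s ≤ t1) (r r' : ℝ) (h : r + (t - s) = r') (xx : (V.M t).space r),
    (maps s h0 hs1).maps r' r' (add_zero r') ((V.G s t h0 hst h1).maps r r' h xx)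
      = (W.G s t h0 hst h1).maps r r' h ((maps t h0t h1).maps r r (add_zero r) xx)

/-- `x` is an extended basis of `X` with support `S`: the elements indexed by `S` form a basis
of `X` realizing the intervals `[b i, d i)` (for `i ∈ S`), and the remaining elements are
zero. -/
def IsExtBasisFamily {K : Type u} [Field K] {ι : Type*} (X : PersistenceModule K)
    (S : Set ι) (b d : ι → ℝ) (x : ∀ i, X.space (b i)) : Prop :=
  (∀ i ∈ S, X.BornAt (b i) (x i)) ∧
  (∀ i ∈ S, X.death (b i) (x i) = d i) ∧
  (∀ i ∉ S, x i = 0) ∧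
  (∀ t : ℝ,
    LinearIndependent K (fun i : {i : ι // i ∈ S ∧ b i ≤ t ∧ t < d i} =>
      X.trans (b i.1) t i.2.2.1 (x i.1)) ∧
    Submodule.span K (Set.range fun i : {i : ι // i ∈ S ∧ b i ≤ t ∧ t < d i} =>
      X.trans (b i.1) t i.2.2.1 (x i.1)) = ⊤)

/-- `A` is the matrix of the `ε`-morphism `α` with respect to the extended bases `x` of `X`
(with support `SX`) and `y` of `Y` (with support `SY`); rows and columns at indices of zero
elements vanish. -/
def IsExtMatrixOf {K : Type u} [Field K] {X Y : PersistenceModule K} {ε : ℝ}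
    {ι : Type*} [Fintype ι] (α : EpsMorphism X Y ε)
    (SX : Set ι) (bX dX : ι → ℝ) (x : ∀ i, X.space (bX i))
    (SY : Set ι) (bY dY : ι → ℝ) (y : ∀ j, Y.space (bY j))
    (A : Matrix ι ι K) : Prop :=
  (∀ i, α.maps (bX i) (bX i + ε) rfl (x i)
      = ∑ j, A j i • Y.pushTo bY y (bX i + ε) j) ∧
  (∀ j i, ¬ (j ∈ SY ∧ bY j ≤ bX i + ε ∧ bX i + ε < dY j) → A j i = 0) ∧
  (∀ i ∉ SX, ∀ j, A j i = 0)

open scoped Classical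

section Aux

namespace Statement10Aux

variable {K : Type u} [Field K]

lemma pushTo_of_le {N : ℕ} (X : PersistenceModule K) (b : Fin N → ℝ)
    (x : ∀ i, X.space (b i)) {h : ℝ} {j : Fin N} (hb : b j ≤ h) :
    X.pushTo b x h j = X.trans (b j) h hb (x j) := by
  simp only [PersistenceModule.pushTo]
  exact dif_pos hb

lemma pushTo_of_not_le {N : ℕ} (X : PersistenceModule K) (b : Fin N → ℝ)
    (x : ∀ i, X.space (b i)) {h : ℝ} {j : Fin N} (hb : ¬ b j ≤ h) :
    X.pushTo b x h j = 0 := by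
  simp only [PersistenceModule.pushTo]
  exact dif_neg hb

lemma trans_pushTo {N : ℕ} (X : PersistenceModule K) (b : Fin N → ℝ)
    (x : ∀ i, X.space (b i)) {h h' : ℝ} {j : Fin N} (hb : b j ≤ h) (hh : h ≤ h') :
    X.trans h h' hh (X.pushTo b x h j) = X.pushTo b x h' j := by
  rw [pushTo_of_le X b x hb, pushTo_of_le X b x (hb.trans hh), X.trans_trans]

lemma space_trivial {N : ℕ} (X : PersistenceModule K) (S : Set (Fin N))
    (b d : Fin N → ℝ) (x : ∀ i, X.space (b i))
    (hx : IsExtBasisFamily X S b d x) {H : ℝ}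
    (hH : ∀ j : Fin N, d j ≤ H) (z : X.space H) : z = 0 := by
  have he : IsEmpty {i : Fin N // i ∈ S ∧ b i ≤ H ∧ H < d i} :=
    ⟨fun j => absurd j.2.2.2 (not_lt.2 (hH j.1))⟩
  have hsp := (hx.2.2.2 H).2
  rw [Set.range_eq_empty, Submodule.span_empty] at hsp
  have hz : z ∈ (⊥ : Submodule K (X.space H)) := hsp ▸ Submodule.mem_top
  simpa using hz

set_option maxHeartbeats 1000000 in
lemma trans_dead {N : ℕ} (X : PersistenceModule K) (S : Set (Fin N))
    (b d : Fin N → ℝ) (x : ∀ i, X.space (b i))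
    (hx : IsExtBasisFamily X S b d x) {i : Fin N} (hi : i ∈ S)
    {h : ℝ} (hbh : b i ≤ h) (hdh : d i ≤ h) :
    X.trans (b i) h hbh (x i) = 0 := by
  haveI : Nonempty (Fin N) := ⟨i⟩
  have hdeath := hx.2.1 i hi
  rw [PersistenceModule.death] at hdeath
  set T : Set ℝ := {s : ℝ | ∃ hs : b i < s, X.trans (b i) s hs.le (x i) = 0} with hTdef
  set Hb : ℝ := Finset.univ.sup' Finset.univ_nonempty (fun j : Fin N => max (b j) (d j))
    with hHb
  have hHd : ∀ j : Fin N, d j ≤ Hb := fun j =>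
    le_trans (le_max_right (b j) (d j))
      (Finset.le_sup' (fun j : Fin N => max (b j) (d j)) (Finset.mem_univ j))
  have hHbb : ∀ j : Fin N, b j ≤ Hb := fun j =>
    le_trans (le_max_left (b j) (d j))
      (Finset.le_sup' (fun j : Fin N => max (b j) (d j)) (Finset.mem_univ j))
  have hTH : (Hb + 1) ∈ T := by
    refine ⟨by linarith [hHbb i], ?_⟩
    exact space_trivial X S b d x hx (fun j => by linarith [hHd j]) _
  have hTne : T.Nonempty := ⟨_, hTH⟩
  have key : ∀ h' : ℝ, d i < h' → ∀ hb' : b i ≤ h', X.trans (b i) h' hb' (x i) = 0 := by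
    intro h' hd' hb'
    obtain ⟨s, hsT, hs⟩ : ∃ s ∈ T, s < h' := by
      by_contra hc
      push_neg at hc
      have hle : h' ≤ sInf T := le_csInf hTne (fun s hs => hc s hs)
      rw [hdeath] at hle
      linarith
    obtain ⟨hs1, hs2⟩ := hsT
    have htt := X.trans_trans (b i) s h' hs1.le hs.le (x i)
    rw [hs2, map_zero] at htt
    exact htt.symm
  rcases hdh.lt_or_eq with hlt | heq
  · exact key h hlt hbh
  · subst heq
    obtain ⟨h', h'1, h'2⟩ : ∃ h', d i < h' ∧ ∀ j : Fin N, d i < d j → h' < d j := by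
      set F := Finset.univ.filter (fun j : Fin N => d i < d j) with hF
      by_cases hFne : F.Nonempty
      · have hlow : d i < F.inf' hFne d :=
          (Finset.lt_inf'_iff hFne).2 (fun j hj => (Finset.mem_filter.1 hj).2)
        refine ⟨(d i + F.inf' hFne d) / 2, by linarith, ?_⟩
        intro j hj
        have h1 : F.inf' hFne d ≤ d j :=
          Finset.inf'_le d (Finset.mem_filter.2 ⟨Finset.mem_univ j, hj⟩)
        linarith
      · exact ⟨d i + 1, by linarith, fun j hj =>
          absurd ⟨j, Finset.mem_filter.2 ⟨Finset.mem_univ j, hj⟩⟩ hFne⟩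
    set z := X.trans (b i) (d i) hbh (x i) with hz
    have hz0 : X.trans (d i) h' h'1.le z = 0 := by
      rw [hz, X.trans_trans]
      exact key h' h'1 (hbh.trans h'1.le)
    set Bd : Module.Basis {j : Fin N // j ∈ S ∧ b j ≤ d i ∧ d i < d j} K (X.space (d i)) :=
      Module.Basis.mk (hx.2.2.2 (d i)).1 (hx.2.2.2 (d i)).2.ge with hBd
    have hli2 : LinearIndependent K
        (fun j : {j : Fin N // j ∈ S ∧ b j ≤ d i ∧ d i < d j} =>
          X.trans (b j.1) h' (j.2.2.1.trans h'1.le) (x j.1)) := by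
      have hli := (hx.2.2.2 h').1
      exact hli.comp
        (fun j : {j : Fin N // j ∈ S ∧ b j ≤ d i ∧ d i < d j} =>
          (⟨j.1, j.2.1, j.2.2.1.trans h'1.le, h'2 j.1 j.2.2.2⟩ :
            {j : Fin N // j ∈ S ∧ b j ≤ h' ∧ h' < d j}))
        (fun u1 u2 hab => by
          have h1 := congrArg
            (Subtype.val (p := fun j : Fin N => j ∈ S ∧ b j ≤ h' ∧ h' < d j)) hab
          exact Subtype.ext h1)
    have hsum : ∑ j, Bd.repr z j •
        X.trans (b j.1) h' (j.2.2.1.trans h'1.le) (x j.1) = 0 := by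
      have h3 : X.trans (d i) h' h'1.le z
          = ∑ j, Bd.repr z j • X.trans (b j.1) h' (j.2.2.1.trans h'1.le) (x j.1) := by
        conv_lhs => rw [← Bd.sum_repr z]
        rw [map_sum]
        refine Finset.sum_congr rfl (fun j _ => ?_)
        rw [map_smul]
        congr 1
        rw [hBd, Module.Basis.mk_apply]
        exact X.trans_trans _ _ _ _ _ _
      rw [← h3, hz0]
    have hrepr : ∀ j, Bd.repr z j = 0 := Fintype.linearIndependent_iff.mp hli2 _ hsum
    show z = 0
    calc z = ∑ j, Bd.repr z j • Bd j := (Bd.sum_repr z).symm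
      _ = 0 := Finset.sum_eq_zero (fun j _ => by rw [hrepr j, zero_smul])

lemma pushTo_eq_zero {N : ℕ} (X : PersistenceModule K) (S : Set (Fin N))
    (b d : Fin N → ℝ) (x : ∀ i, X.space (b i)) (hx : IsExtBasisFamily X S b d x)
    {h : ℝ} {j : Fin N} (hj : j ∉ S ∨ d j ≤ h) :
    X.pushTo b x h j = 0 := by
  by_cases hb : b j ≤ h
  · rw [pushTo_of_le X b x hb]
    rcases hj with hj | hj
    · rw [hx.2.2.1 j hj, map_zero]
    · by_cases hjS : j ∈ S
      · exact trans_dead X S b d x hx hjS hb hj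
      · rw [hx.2.2.1 j hjS, map_zero]
  · exact pushTo_of_not_le X b x hb

/-- The basis of `X.space r` given by the alive elements of an extended basis family. -/
noncomputable def extBasis {N : ℕ} (X : PersistenceModule K) (S : Set (Fin N))
    (b d : Fin N → ℝ) (x : ∀ i, X.space (b i)) (hx : IsExtBasisFamily X S b d x) (r : ℝ) :
    Module.Basis {i : Fin N // i ∈ S ∧ b i ≤ r ∧ r < d i} K (X.space r) :=
  Module.Basis.mk (hx.2.2.2 r).1 (hx.2.2.2 r).2.ge

lemma extBasis_eq_pushTo {N : ℕ} (X : PersistenceModule K) (S : Set (Fin N))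
    (b d : Fin N → ℝ) (x : ∀ i, X.space (b i)) (hx : IsExtBasisFamily X S b d x) (r : ℝ)
    (j : {i : Fin N // i ∈ S ∧ b i ≤ r ∧ r < d i}) :
    extBasis X S b d x hx r j = X.pushTo b x r j.1 := by
  rw [extBasis, Module.Basis.mk_apply, pushTo_of_le X b x j.2.2.1]

/-- The linear map sending the alive basis of `X` at height `r` to that of `Y`. -/
noncomputable def rhoLin {N : ℕ} (X Y : PersistenceModule K) (S : Set (Fin N))
    (b d : Fin N → ℝ) (x : ∀ i, X.space (b i)) (y : ∀ i, Y.space (b i))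
    (hx : IsExtBasisFamily X S b d x) (r : ℝ) : X.space r →ₗ[K] Y.space r :=
  (extBasis X S b d x hx r).constr K (fun j => Y.trans (b j.1) r j.2.2.1 (y j.1))

lemma rhoLin_basis {N : ℕ} (X Y : PersistenceModule K) (S : Set (Fin N))
    (b d : Fin N → ℝ) (x : ∀ i, X.space (b i)) (y : ∀ i, Y.space (b i))
    (hx : IsExtBasisFamily X S b d x) (r : ℝ)
    (j : {i : Fin N // i ∈ S ∧ b i ≤ r ∧ r < d i}) :
    rhoLin X Y S b d x y hx r (extBasis X S b d x hx r j) = Y.pushTo b y r j.1 := by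
  rw [rhoLin, Module.Basis.constr_basis]
  exact (pushTo_of_le Y b y j.2.2.1).symm

lemma rhoLin_pushTo {N : ℕ} (X Y : PersistenceModule K) (S : Set (Fin N))
    (b d : Fin N → ℝ) (x : ∀ i, X.space (b i)) (y : ∀ i, Y.space (b i))
    (hx : IsExtBasisFamily X S b d x) (hy : IsExtBasisFamily Y S b d y) (r : ℝ)
    (j : Fin N) :
    rhoLin X Y S b d x y hx r (X.pushTo b x r j) = Y.pushTo b y r j := by
  by_cases hj : j ∈ S ∧ b j ≤ r ∧ r < d j
  · have h1 : X.pushTo b x r j = extBasis X S b d x hx r ⟨j, hj⟩ :=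
      (extBasis_eq_pushTo X S b d x hx r ⟨j, hj⟩).symm
    rw [h1, rhoLin_basis]
  · by_cases hS : j ∈ S
    · by_cases hb : b j ≤ r
      · have hd : d j ≤ r := by
          by_contra hd
          exact hj ⟨hS, hb, lt_of_not_ge hd⟩
        rw [pushTo_eq_zero X S b d x hx (Or.inr hd),
          pushTo_eq_zero Y S b d y hy (Or.inr hd), map_zero]
      · rw [pushTo_of_not_le X b x hb, pushTo_of_not_le Y b y hb, map_zero]
    · rw [pushTo_eq_zero X S b d x hx (Or.inl hS),
        pushTo_eq_zero Y S b d y hy (Or.inl hS), map_zero]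

lemma rhoLin_trans_apply {N : ℕ} (X Y : PersistenceModule K) (S : Set (Fin N))
    (b d : Fin N → ℝ) (x : ∀ i, X.space (b i)) (y : ∀ i, Y.space (b i))
    (hx : IsExtBasisFamily X S b d x) (hy : IsExtBasisFamily Y S b d y)
    {r r' : ℝ} (hrr : r ≤ r') (z : X.space r) :
    rhoLin X Y S b d x y hx r' (X.trans r r' hrr z)
      = Y.trans r r' hrr (rhoLin X Y S b d x y hx r z) := by
  have hmap : (rhoLin X Y S b d x y hx r').comp (X.trans r r' hrr)
      = (Y.trans r r' hrr).comp (rhoLin X Y S b d x y hx r) := by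
    refine (extBasis X S b d x hx r).ext (fun j => ?_)
    simp only [LinearMap.comp_apply]
    rw [extBasis_eq_pushTo, trans_pushTo X b x j.2.2.1 hrr,
      rhoLin_pushTo X Y S b d x y hx hy, rhoLin_pushTo X Y S b d x y hx hy,
      trans_pushTo Y b y j.2.2.1 hrr]
  exact LinearMap.congr_fun hmap z

lemma rhoLin_bijective {N : ℕ} (X Y : PersistenceModule K) (S : Set (Fin N))
    (b d : Fin N → ℝ) (x : ∀ i, X.space (b i)) (y : ∀ i, Y.space (b i))
    (hx : IsExtBasisFamily X S b d x) (hy : IsExtBasisFamily Y S b d y) (r : ℝ) :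
    Function.Bijective (rhoLin X Y S b d x y hx r) := by
  have heq : rhoLin X Y S b d x y hx r
      = ((extBasis X S b d x hx r).equiv (extBasis Y S b d y hy r)
          (Equiv.refl _)).toLinearMap := by
    refine (extBasis X S b d x hx r).ext (fun j => ?_)
    rw [rhoLin_basis]
    simp only [LinearEquiv.coe_coe]
    rw [Module.Basis.equiv_apply, Equiv.refl_apply, extBasis_eq_pushTo]
  rw [heq]
  simp only [LinearEquiv.coe_coe]
  exact ((extBasis X S b d x hx r).equiv (extBasis Y S b d y hy r)
    (Equiv.refl _)).bijective

lemma matrixOf_pushTo {X Y : PersistenceModule K} {ε : ℝ} {N : ℕ}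
    (α : EpsMorphism X Y ε)
    {SX : Set (Fin N)} {bX dX : Fin N → ℝ} {x : ∀ i, X.space (bX i)}
    {SY : Set (Fin N)} {bY dY : Fin N → ℝ} {y : ∀ j, Y.space (bY j)}
    {A : Matrix (Fin N) (Fin N) K}
    (hA : IsExtMatrixOf α SX bX dX x SY bY dY y A)
    (i : Fin N) {r r' : ℝ} (hbr : bX i ≤ r) (h : r + ε = r') :
    α.maps r r' h (X.pushTo bX x r i) = ∑ j, A j i • Y.pushTo bY y r' j := by
  have hle : bX i + ε ≤ r' := by linarith
  rw [pushTo_of_le X bX x hbr, α.comm (bX i) r (bX i + ε) r' rfl h hbr (x i),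
    hA.1 i, map_sum]
  refine Finset.sum_congr rfl (fun j _ => ?_)
  rw [map_smul]
  by_cases hAj : A j i = 0
  · rw [hAj, zero_smul, zero_smul]
  · have hj : j ∈ SY ∧ bY j ≤ bX i + ε ∧ bX i + ε < dY j := by
      by_contra hc
      exact hAj (hA.2.1 j i hc)
    rw [trans_pushTo Y bY y hj.2.1 hle]

/-- The isomorphism of persistence modules induced by matching extended bases,
as a `0`-morphism. -/
noncomputable def rhoEps {N : ℕ} (X Y : PersistenceModule K) (S : Set (Fin N))
    (b d : Fin N → ℝ) (x : ∀ i, X.space (b i)) (y : ∀ i, Y.space (b i))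
    (hx : IsExtBasisFamily X S b d x) (hy : IsExtBasisFamily Y S b d y) :
    EpsMorphism X Y 0 where
  maps r r' h := (Y.trans r r' (by linarith)).comp (rhoLin X Y S b d x y hx r)
  comm s t s' t' hs ht hst z := by
    simp only [LinearMap.comp_apply]
    rw [rhoLin_trans_apply X Y S b d x y hx hy hst z, Y.trans_trans, Y.trans_trans]

lemma rhoEps_maps_apply {N : ℕ} (X Y : PersistenceModule K) (S : Set (Fin N))
    (b d : Fin N → ℝ) (x : ∀ i, X.space (b i)) (y : ∀ i, Y.space (b i))
    (hx : IsExtBasisFamily X S b d x) (hy : IsExtBasisFamily Y S b d y)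
    (r r' : ℝ) (h : r + 0 = r') (z : X.space r) :
    (rhoEps X Y S b d x y hx hy).maps r r' h z
      = Y.trans r r' (by linarith) (rhoLin X Y S b d x y hx r z) := rfl

lemma rho_comm {N : ℕ} {X1 Y1 X2 Y2 : PersistenceModule K} {ε : ℝ}
    {S1 S2 : Set (Fin N)} {b1 d1 b2 d2 : Fin N → ℝ}
    {x1 : ∀ i, X1.space (b1 i)} {y1 : ∀ i, Y1.space (b1 i)}
    {x2 : ∀ i, X2.space (b2 i)} {y2 : ∀ i, Y2.space (b2 i)}
    (hx1 : IsExtBasisFamily X1 S1 b1 d1 x1) (hy1 : IsExtBasisFamily Y1 S1 b1 d1 y1)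
    (hx2 : IsExtBasisFamily X2 S2 b2 d2 x2) (hy2 : IsExtBasisFamily Y2 S2 b2 d2 y2)
    (αX : EpsMorphism X1 X2 ε) (αY : EpsMorphism Y1 Y2 ε)
    {A : Matrix (Fin N) (Fin N) K}
    (hAX : IsExtMatrixOf αX S1 b1 d1 x1 S2 b2 d2 x2 A)
    (hAY : IsExtMatrixOf αY S1 b1 d1 y1 S2 b2 d2 y2 A)
    (r r' : ℝ) (h : r + ε = r') (h2 : r + 0 = r) (h3 : r' + 0 = r') (z : X1.space r) :
    (rhoEps X2 Y2 S2 b2 d2 x2 y2 hx2 hy2).maps r' r' h3 (αX.maps r r' h z)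
      = αY.maps r r' h ((rhoEps X1 Y1 S1 b1 d1 x1 y1 hx1 hy1).maps r r h2 z) := by
  have hmap : (((rhoEps X2 Y2 S2 b2 d2 x2 y2 hx2 hy2).maps r' r' h3).comp
        (αX.maps r r' h))
      = ((αY.maps r r' h).comp
        ((rhoEps X1 Y1 S1 b1 d1 x1 y1 hx1 hy1).maps r r h2)) := by
    refine (extBasis X1 S1 b1 d1 x1 hx1 r).ext (fun j => ?_)
    simp only [LinearMap.comp_apply]
    rw [extBasis_eq_pushTo, matrixOf_pushTo αX hAX j.1 j.2.2.1 h,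
      rhoEps_maps_apply, rhoEps_maps_apply, Y2.trans_self, Y1.trans_self]
    simp only [LinearMap.id_coe, id_eq]
    rw [rhoLin_pushTo X1 Y1 S1 b1 d1 x1 y1 hx1 hy1 r j.1,
      matrixOf_pushTo αY hAY j.1 j.2.2.1 h, map_sum]
    refine Finset.sum_congr rfl (fun j' _ => ?_)
    rw [map_smul, rhoLin_pushTo X2 Y2 S2 b2 d2 x2 y2 hx2 hy2 r' j']
  exact LinearMap.congr_fun hmap z

end Statement10Aux

end Aux

open Statement10Aux

/-- Two vineyard modules admitting families of extended bases (with the same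
supports, births and deaths) with respect to which all the interleaving matrices agree are
isomorphic: the family of maps `ρ_t` whose matrix is the projection `π_{S_t}` is an invertible
morphism of vineyard modules. -/
theorem statement10 {K : Type u} [Field K] {t0 t1 : ℝ} (ht01 : t0 ≤ t1) {N : ℕ}
    (V W : VineyardModule K t0 t1)
    (S : ℝ → Set (Fin N)) (b d : Fin N → ℝ → ℝ)
    (hbd : ∀ t ∈ Set.Icc t0 t1, ∀ i ∈ S t, b i t < d i t)
    (xV : ∀ t : ℝ, ∀ i, (V.M t).space (b i t))
    (xW : ∀ t : ℝ, ∀ i, (W.M t).space (b i t))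
    (hV : ∀ t ∈ Set.Icc t0 t1,
      IsExtBasisFamily (V.M t) (S t) (fun i => b i t) (fun i => d i t) (xV t))
    (hW : ∀ t ∈ Set.Icc t0 t1,
      IsExtBasisFamily (W.M t) (S t) (fun i => b i t) (fun i => d i t) (xW t))
    (hα : ∀ (s t : ℝ) (h0 : t0 ≤ s) (hst : s < t) (h1 : t ≤ t1),
      ∃ A : Matrix (Fin N) (Fin N) K,
        IsExtMatrixOf (V.F s t h0 hst h1)
          (S s) (fun i => b i s) (fun i => d i s) (xV s)
          (S t) (fun i => b i t) (fun i => d i t) (xV t) A ∧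
        IsExtMatrixOf (W.F s t h0 hst h1)
          (S s) (fun i => b i s) (fun i => d i s) (xW s)
          (S t) (fun i => b i t) (fun i => d i t) (xW t) A)
    (hβ : ∀ (s t : ℝ) (h0 : t0 ≤ s) (hst : s < t) (h1 : t ≤ t1),
      ∃ B : Matrix (Fin N) (Fin N) K,
        IsExtMatrixOf (V.G s t h0 hst h1)
          (S t) (fun i => b i t) (fun i => d i t) (xV t)
          (S s) (fun i => b i s) (fun i => d i s) (xV s) B ∧
        IsExtMatrixOf (W.G s t h0 hst h1)
          (S t) (fun i => b i t) (fun i => d i t) (xW t)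
          (S s) (fun i => b i s) (fun i => d i s) (xW s) B) :
    ∃ ρ : VineyardMorphism V W,
      (∀ (t : ℝ) (h0 : t0 ≤ t) (h1 : t ≤ t1) (r r' : ℝ) (h : r + 0 = r'),
        Function.Bijective ((ρ.maps t h0 h1).maps r r' h)) ∧
      (∀ (t : ℝ) (h0 : t0 ≤ t) (h1 : t ≤ t1),
        IsExtMatrixOf (ρ.maps t h0 h1)
          (S t) (fun i => b i t) (fun i => d i t) (xV t)
          (S t) (fun i => b i t) (fun i => d i t) (xW t)
          (Matrix.diagonal fun i => if i ∈ S t then (1 : K) else 0)) := by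
  refine ⟨⟨fun t ht0 ht1 => rhoEps (V.M t) (W.M t) (S t) (fun i => b i t)
      (fun i => d i t) (xV t) (xW t) (hV t ⟨ht0, ht1⟩) (hW t ⟨ht0, ht1⟩), ?_, ?_⟩,
    ?_, ?_⟩
  · -- commutation with the forward interleaving maps
    intro s t h0 hst h1 h0t hs1 r r' h xx
    obtain ⟨A, hAV, hAW⟩ := hα s t h0 hst h1
    exact rho_comm (hV s ⟨h0, hs1⟩) (hW s ⟨h0, hs1⟩) (hV t ⟨h0t, h1⟩) (hW t ⟨h0t, h1⟩)
      (V.F s t h0 hst h1) (W.F s t h0 hst h1) hAV hAW r r' h (add_zero r)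
      (add_zero r') xx
  · -- commutation with the backward interleaving maps
    intro s t h0 hst h1 h0t hs1 r r' h xx
    obtain ⟨B, hBV, hBW⟩ := hβ s t h0 hst h1
    exact rho_comm (hV t ⟨h0t, h1⟩) (hW t ⟨h0t, h1⟩) (hV s ⟨h0, hs1⟩) (hW s ⟨h0, hs1⟩)
      (V.G s t h0 hst h1) (W.G s t h0 hst h1) hBV hBW r r' h (add_zero r)
      (add_zero r') xx
  · -- bijectivity
    intro t ht0 ht1 r r' h
    have hrr : r = r' := by linarith
    subst hrr
    show Function.Bijective ⇑(((W.M t).trans r r (le_refl r)).comp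
      (rhoLin (V.M t) (W.M t) (S t) (fun i => b i t) (fun i => d i t) (xV t) (xW t)
        (hV t ⟨ht0, ht1⟩) r))
    rw [(W.M t).trans_self, LinearMap.id_comp]
    exact rhoLin_bijective (V.M t) (W.M t) (S t) _ _ (xV t) (xW t)
      (hV t ⟨ht0, ht1⟩) (hW t ⟨ht0, ht1⟩) r
  · -- the matrix of `ρ_t` is the projection onto `S t`
    intro t ht0 ht1
    have hVt := hV t ⟨ht0, ht1⟩
    have hWt := hW t ⟨ht0, ht1⟩
    refine ⟨?_, ?_, ?_⟩
    · intro i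
      show (rhoEps (V.M t) (W.M t) (S t) (fun i => b i t) (fun i => d i t)
          (xV t) (xW t) hVt hWt).maps (b i t) (b i t + 0) rfl (xV t i) = _
      rw [rhoEps_maps_apply]
      have hx0 : xV t i = (V.M t).pushTo (fun i => b i t) (xV t) (b i t) i := by
        rw [pushTo_of_le (V.M t) _ (xV t) (le_refl (b i t)), (V.M t).trans_self]
        rfl
      rw [hx0, rhoLin_pushTo (V.M t) (W.M t) (S t) _ _ (xV t) (xW t) hVt hWt,
        trans_pushTo (W.M t) _ (xW t) (le_refl (b i t))
          (by linarith : b i t ≤ b i t + 0),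
        Finset.sum_eq_single i
          (fun j _ hji => by rw [Matrix.diagonal_apply_ne _ hji, zero_smul])
          (fun hi => absurd (Finset.mem_univ i) hi),
        Matrix.diagonal_apply_eq]
      by_cases hiS : i ∈ S t
      · rw [if_pos hiS, one_smul]
      · rw [if_neg hiS, zero_smul,
          pushTo_eq_zero (W.M t) (S t) _ (fun i => d i t) (xW t) hWt (Or.inl hiS)]
    · intro j i hji
      by_cases hij : j = i
      · subst hij
        rw [Matrix.diagonal_apply_eq, if_neg]
        intro hjS
        exact hji ⟨hjS, by linarith, by have := hbd t ⟨ht0, ht1⟩ j hjS; linarith⟩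
      · exact Matrix.diagonal_apply_ne _ hij
    · intro i hiS j
      by_cases hij : j = i
      · subst hij
        rw [Matrix.diagonal_apply_eq, if_neg hiS]
      · exact Matrix.diagonal_apply_ne _ hij
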